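/- Under Assumptions (A1) and (A2), let 0 < δ < 1 and let 0 = t₀ < t₁ < ⋯ < t_n = T be the uniform partition with mesh T/n = √δ. There is a constant C > 0 depending only on x₀ and T such that for any two admissible controls u, u⁰ ∈ 𝒰[0,T] satisfying |X^{u⁰}(t_i) − X^u(t_i)| ≤ δ for all i = 0,1,…,n, one has sup_{0≤r≤T} |X^{u⁰}(r) − X^u(r)| ≤ C√δ. -/

import Mathlib

open MeasureTheory Set Filter Topology

noncomputable section

/-- An admissible control on `[0,T]`: measurable, `U`-valued, square-integrable. -/
def Admissible (U : Set ℝ) (T : ℝ) (u : ℝ → ℝ) : Prop :=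
  Measurable u ∧ (∀ t, u t ∈ U) ∧
    IntervalIntegrable (fun t => (u t) ^ 2) MeasureTheory.volume 0 T

/-- `X` solves the controlled ODE `X s = x₀ + ∫₀ˢ b (X t) (u t) dt` on `[0,T]`. -/
def Trajectory (b : ℝ → ℝ → ℝ) (x₀ T : ℝ) (u X : ℝ → ℝ) : Prop :=
  ContinuousOn X (Set.Icc 0 T) ∧
    ∀ s ∈ Set.Icc (0 : ℝ) T, X s = x₀ + ∫ t in (0 : ℝ)..s, b (X t) (u t)

lemma traj_lip (T x₀ : ℝ) (hT : 0 < T) (U : Set ℝ) (b : ℝ → ℝ → ℝ)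
    (hA1uc : UniformContinuousOn (fun q : ℝ × ℝ => b q.1 q.2) (Set.univ ×ˢ U))
    (c₁ : ℝ) (hc₁ : 0 < c₁)
    (hlip : ∀ x₁ x₂ v, v ∈ U → |b x₁ v - b x₂ v| ≤ c₁ * |x₁ - x₂|)
    (K : ℝ) (hK : 0 ≤ K) (hbd : ∀ v ∈ U, |b 0 v| ≤ K)
    (u X : ℝ → ℝ) (hu : Admissible U T u) (hX : Trajectory b x₀ T u X) :
    ∀ t ∈ Set.Icc (0:ℝ) T, ∀ r ∈ Set.Icc (0:ℝ) T, t ≤ r →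
      |X r - X t| ≤ (K + c₁ * gronwallBound |x₀| c₁ K T) * (r - t) := by
  obtain ⟨hXc, hXeq⟩ := hX
  obtain ⟨humeas, huU, -⟩ := hu
  -- pointwise bound on b
  have hbx : ∀ x v, v ∈ U → |b x v| ≤ K + c₁ * |x| := by
    intro x v hv
    have h0 : b x v = (b x v - b 0 v) + b 0 v := by ring
    calc |b x v| = |(b x v - b 0 v) + b 0 v| := by rw [← h0]
      _ ≤ |b x v - b 0 v| + |b 0 v| := abs_add_le _ _
      _ ≤ c₁ * |x - 0| + K := add_le_add (hlip x 0 v hv) (hbd v hv)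
      _ = K + c₁ * |x| := by rw [sub_zero]; ring
  -- clamp
  set π : ℝ → ℝ := fun t => max 0 (min t T) with hπ
  have hπcont : Continuous π := (continuous_const.max ((continuous_id.min continuous_const)))
  have hπmem : ∀ t, π t ∈ Set.Icc (0:ℝ) T := by
    intro t
    constructor
    · exact le_max_left _ _
    · exact max_le hT.le (min_le_right _ _)
  have hπid : ∀ t ∈ Set.Icc (0:ℝ) T, π t = t := by
    intro t ht
    simp [hπ, min_eq_left ht.2, max_eq_right ht.1]
  set Y : ℝ → ℝ := fun t => X (π t) with hY
  have hYcont : Continuous Y := hXc.comp_continuous hπcont hπmem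
  have hYX : ∀ t ∈ Set.Icc (0:ℝ) T, Y t = X t := fun t ht => by rw [hY]; simp [hπid t ht]
  -- a priori bound on Y : continuous on compact
  obtain ⟨M₀, hM₀⟩ := isCompact_Icc.exists_bound_of_continuousOn
    (s := Set.Icc (0:ℝ) T) (hYcont.continuousOn)
  have hM₀' : ∀ t : ℝ, |Y t| ≤ M₀ := by
    intro t
    have := hM₀ (π t) (hπmem t)
    simpa [hY, hπid _ (hπmem t), Real.norm_eq_abs] using this
  -- measurability of φ
  set φ : ℝ → ℝ := fun t => b (Y t) (u t) with hφ
  have hbcont : ContinuousOn (fun q : ℝ × ℝ => b q.1 q.2) (Set.univ ×ˢ U) :=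
    hA1uc.continuousOn
  have hφmeas : Measurable φ := by
    have hg : Measurable (fun t => (⟨(Y t, u t), by exact ⟨trivial, huU t⟩⟩ :
        (Set.univ ×ˢ U : Set (ℝ × ℝ)))) :=
      Measurable.subtype_mk ((hYcont.measurable.prodMk humeas))
    have hf : Continuous ((Set.univ ×ˢ U : Set (ℝ × ℝ)).restrict
        (fun q : ℝ × ℝ => b q.1 q.2)) := hbcont.restrict
    exact hf.measurable.comp hg
  have hφbd : ∀ t, |φ t| ≤ K + c₁ * M₀ := by
    intro t
    refine (hbx (Y t) (u t) (huU t)).trans ?_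
    have := hM₀' t
    nlinarith [hM₀' t]
  have hφint : ∀ a c : ℝ, IntervalIntegrable φ volume a c := by
    intro a c
    rw [intervalIntegrable_iff]
    refine Integrable.mono' (g := fun _ => K + c₁ * M₀) ?_ hφmeas.aestronglyMeasurable ?_
    · exact integrableOn_const measure_Ioc_lt_top.ne
    · exact Filter.Eventually.of_forall fun t => by simpa [Real.norm_eq_abs] using hφbd t
  -- rewrite trajectory equation with φ
  have hXeq' : ∀ s ∈ Set.Icc (0:ℝ) T, X s = x₀ + ∫ t in (0:ℝ)..s, φ t := by
    intro s hs
    rw [hXeq s hs]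
    congr 1
    apply intervalIntegral.integral_congr
    intro t ht
    rw [Set.uIcc_of_le hs.1] at ht
    show b (X t) (u t) = b (Y t) (u t)
    rw [hYX t ⟨ht.1, ht.2.trans hs.2⟩]
  -- Gronwall setup
  set g : ℝ → ℝ := fun t => K + c₁ * |Y t| with hg
  have hgcont : Continuous g := continuous_const.add (continuous_const.mul hYcont.abs)
  set F : ℝ → ℝ := fun s => |x₀| + ∫ t in (0:ℝ)..s, g t with hF
  have hFderiv : ∀ s : ℝ, HasDerivAt F (g s) s := by
    intro s
    exact ((intervalIntegral.integral_hasDerivAt_right (hgcont.intervalIntegrable _ _)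
      (hgcont.stronglyMeasurableAtFilter _ _) hgcont.continuousAt).const_add _)
  -- |X s| ≤ F s on [0,T]
  have hXF : ∀ s ∈ Set.Icc (0:ℝ) T, |X s| ≤ F s := by
    intro s hs
    rw [hXeq' s hs]
    refine (abs_add_le _ _).trans ?_
    rw [hF]
    refine add_le_add le_rfl ?_
    refine (intervalIntegral.abs_integral_le_integral_abs hs.1).trans ?_
    apply intervalIntegral.integral_mono_on hs.1 (hφint 0 s).abs
      (hgcont.intervalIntegrable _ _)
    intro t ht
    have htT : t ∈ Set.Icc (0:ℝ) T := ⟨ht.1, ht.2.trans hs.2⟩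
    have := hbx (Y t) (u t) (huU t)
    simpa [hφ, hg] using this
  have hFnonneg : ∀ s ∈ Set.Icc (0:ℝ) T, 0 ≤ F s :=
    fun s hs => (abs_nonneg _).trans (hXF s hs)
  have hgron : ∀ s ∈ Set.Icc (0:ℝ) T, F s ≤ gronwallBound |x₀| c₁ K (s - 0) := by
    intro s₀ hs₀
    have h := norm_le_gronwallBound_of_norm_deriv_right_le
      (f := F) (f' := g) (a := 0) (b := T) (δ := |x₀|) (K := c₁) (ε := K)
      ((fun s _ => (hFderiv s).continuousAt.continuousWithinAt))
      (fun s _ => (hFderiv s).hasDerivWithinAt)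
      (by simp [hF, Real.norm_eq_abs, abs_abs])
      ?_ s₀ hs₀
    · rwa [Real.norm_eq_abs, abs_of_nonneg (hFnonneg s₀ hs₀)] at h
    · intro s hs
      have hs' : s ∈ Set.Icc (0:ℝ) T := ⟨hs.1, hs.2.le⟩
      have hgs : g s = K + c₁ * |Y s| := rfl
      have h1 : ‖g s‖ = g s := by
        rw [Real.norm_eq_abs, abs_of_nonneg]
        rw [hgs]
        have : (0:ℝ) ≤ c₁ * |Y s| := mul_nonneg hc₁.le (abs_nonneg _)
        linarith
      have h2 : ‖F s‖ = F s := by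
        rw [Real.norm_eq_abs, abs_of_nonneg (hFnonneg s hs')]
      rw [h1, h2, hgs]
      have hXFs := hXF s hs'
      rw [← hYX s hs'] at hXFs
      nlinarith [mul_le_mul_of_nonneg_left hXFs hc₁.le]
  -- monotonicity of the Gronwall bound, uniform bound on X
  have hXM : ∀ s ∈ Set.Icc (0:ℝ) T, |X s| ≤ gronwallBound |x₀| c₁ K T := by
    intro s hs
    refine (hXF s hs).trans ((hgron s hs).trans ?_)
    rw [sub_zero]
    simp only [gronwallBound_of_K_ne_0 hc₁.ne']
    have he : Real.exp (c₁ * s) ≤ Real.exp (c₁ * T) :=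
      Real.exp_le_exp.2 (by nlinarith [hs.2])
    have h1 : |x₀| * Real.exp (c₁ * s) ≤ |x₀| * Real.exp (c₁ * T) :=
      mul_le_mul_of_nonneg_left he (abs_nonneg _)
    have h2 : K / c₁ * (Real.exp (c₁ * s) - 1) ≤ K / c₁ * (Real.exp (c₁ * T) - 1) :=
      mul_le_mul_of_nonneg_left (by linarith) (div_nonneg hK hc₁.le)
    linarith
  set M := gronwallBound |x₀| c₁ K T with hM
  -- final Lipschitz estimate
  intro t ht r hr htr
  have hsub : X r - X t = ∫ s in t..r, φ s := by
    rw [hXeq' r hr, hXeq' t ht]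
    have := intervalIntegral.integral_interval_sub_left (hφint 0 r) (hφint 0 t)
    linarith [this]
  rw [hsub]
  refine (intervalIntegral.abs_integral_le_integral_abs htr).trans ?_
  have hmono : (∫ s in t..r, |φ s|) ≤ ∫ _s in t..r, (K + c₁ * M) := by
    apply intervalIntegral.integral_mono_on htr (hφint t r).abs intervalIntegrable_const
    intro s hs
    have hsT : s ∈ Set.Icc (0:ℝ) T := ⟨ht.1.trans hs.1, hs.2.trans hr.2⟩
    have h1 : |φ s| ≤ K + c₁ * |Y s| := by
      have := hbx (Y s) (u s) (huU s)
      simpa [hφ] using this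
    have h2 : |Y s| ≤ M := by rw [hYX s hsT]; exact hXM s hsT
    nlinarith [mul_le_mul_of_nonneg_left h2 hc₁.le]
  refine hmono.trans ?_
  rw [intervalIntegral.integral_const, smul_eq_mul]
  ring_nf
  exact le_refl _

/-- If two trajectories are `δ`-close at the points of a uniform partition of
mesh `√δ`, they are `C√δ`-close uniformly on `[0,T]`, with `C` depending only
on `x₀` and `T`. -/
theorem stmt_11
    (T x₀ : ℝ) (hT : 0 < T) (U : Set ℝ) (hU : IsConnected U)
    (b : ℝ → ℝ → ℝ)
    -- (A1)
    (hA1uc : UniformContinuousOn (fun q : ℝ × ℝ => b q.1 q.2) (Set.univ ×ˢ U))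
    (hA1lip : ∃ c > 0, ∀ x₁ x₂ v, v ∈ U → |b x₁ v - b x₂ v| ≤ c * |x₁ - x₂|)
    -- (A2)
    (hA2 : ∃ c > 0, ∀ u : ℝ → ℝ, Admissible U T u →
      (∫ t in (0 : ℝ)..T, (b 0 (u t)) ^ 2) ≤ c) :
    ∃ C > 0, ∀ (δ : ℝ) (n : ℕ), 0 < δ → δ < 1 → 0 < n →
      T / n = Real.sqrt δ →
      ∀ u X u0 X0 : ℝ → ℝ,
        Admissible U T u → Trajectory b x₀ T u X →
        Admissible U T u0 → Trajectory b x₀ T u0 X0 →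
        (∀ i ≤ n, |X0 ((i : ℝ) * T / n) - X ((i : ℝ) * T / n)| ≤ δ) →
        ∀ r ∈ Set.Icc (0 : ℝ) T, |X0 r - X r| ≤ C * Real.sqrt δ := by
  obtain ⟨c₁, hc₁, hlip⟩ := hA1lip
  obtain ⟨c₂, hc₂, hA2'⟩ := hA2
  -- bound on b 0 v for v ∈ U via constant controls
  set K := Real.sqrt (c₂ / T) with hKdef
  have hK : 0 ≤ K := Real.sqrt_nonneg _
  have hbd : ∀ v ∈ U, |b 0 v| ≤ K := by
    intro v hv
    have hadm : Admissible U T (fun _ => v) :=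
      ⟨measurable_const, fun _ => hv, intervalIntegrable_const⟩
    have h := hA2' (fun _ => v) hadm
    rw [intervalIntegral.integral_const, smul_eq_mul, sub_zero] at h
    have hsq : (b 0 v) ^ 2 ≤ c₂ / T := by
      rw [le_div_iff₀ hT]
      linarith [h]
    calc |b 0 v| = Real.sqrt ((b 0 v) ^ 2) := (Real.sqrt_sq_eq_abs _).symm
      _ ≤ K := Real.sqrt_le_sqrt hsq
  set L := K + c₁ * gronwallBound |x₀| c₁ K T with hLdef
  have hL : 0 ≤ L := by
    have hg : 0 ≤ gronwallBound |x₀| c₁ K T := by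
      rw [gronwallBound_of_K_ne_0 hc₁.ne']
      have h1 : (1:ℝ) ≤ Real.exp (c₁ * T) := Real.one_le_exp (by positivity)
      have := abs_nonneg x₀
      have := div_nonneg hK hc₁.le
      nlinarith
    nlinarith
  refine ⟨2 * L + 1, by positivity, ?_⟩
  intro δ n hδ hδ1 hn hmesh u X u0 X0 hu hX hu0 hX0 hclose r hr
  have hlipX := traj_lip T x₀ hT U b hA1uc c₁ hc₁ hlip K hK hbd u X hu hX
  have hlipX0 := traj_lip T x₀ hT U b hA1uc c₁ hc₁ hlip K hK hbd u0 X0 hu0 hX0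
  have hn' : (0:ℝ) < n := Nat.cast_pos.2 hn
  have hsqrt : 0 < Real.sqrt δ := Real.sqrt_pos.2 hδ
  -- choose partition point
  set i : ℕ := ⌊r * n / T⌋₊ with hidef
  have hr0 : 0 ≤ r := hr.1
  have hrT : r ≤ T := hr.2
  have hiℝ : (i:ℝ) ≤ r * n / T := Nat.floor_le (by positivity)
  have hin : i ≤ n := by
    have h1 : r * n / T ≤ (n:ℝ) := by rw [div_le_iff₀ hT]; nlinarith
    calc i ≤ ⌊(n:ℝ)⌋₊ := Nat.floor_mono h1
      _ = n := Nat.floor_natCast n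
  have hiT : (i:ℝ) * T ≤ r * n := by
    rw [le_div_iff₀ hT] at hiℝ
    linarith
  have hsr : (i:ℝ) * T / n ≤ r := by
    rw [div_le_iff₀ hn']
    nlinarith
  have hdiff : r - (i:ℝ) * T / n ≤ Real.sqrt δ := by
    have h1 : r * n / T < (i:ℝ) + 1 := Nat.lt_floor_add_one _
    rw [div_lt_iff₀ hT] at h1
    have h2 : r ≤ ((i:ℝ) + 1) * T / n := by
      rw [le_div_iff₀ hn']; nlinarith
    rw [← hmesh]
    have h3 : ((i:ℝ) + 1) * T / n = (i:ℝ) * T / n + T / n := by ring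
    linarith
  have hs0 : (0:ℝ) ≤ (i:ℝ) * T / n := by positivity
  have hsT : (i:ℝ) * T / n ≤ T := by
    rw [div_le_iff₀ hn']
    have : (i:ℝ) ≤ (n:ℝ) := Nat.cast_le.2 hin
    nlinarith
  have h1 := hlipX ((i:ℝ) * T / n) ⟨hs0, hsT⟩ r hr hsr
  have h2 := hlipX0 ((i:ℝ) * T / n) ⟨hs0, hsT⟩ r hr hsr
  have h3 := hclose i hin
  have hδs : δ ≤ Real.sqrt δ := by
    have hle1 : Real.sqrt δ ≤ 1 := Real.sqrt_le_one.2 hδ1.le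
    nlinarith [Real.mul_self_sqrt hδ.le]
  have hdist0 : 0 ≤ r - (i:ℝ) * T / n := by linarith
  have hb1 : |X r - X ((i:ℝ) * T / n)| ≤ L * Real.sqrt δ :=
    h1.trans (mul_le_mul_of_nonneg_left hdiff hL)
  have hb2 : |X0 r - X0 ((i:ℝ) * T / n)| ≤ L * Real.sqrt δ :=
    h2.trans (mul_le_mul_of_nonneg_left hdiff hL)
  have htri1 : |X0 r - X r| ≤ |X0 r - X0 ((i:ℝ) * T / n)| + |X0 ((i:ℝ) * T / n) - X r| :=
    abs_sub_le _ _ _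
  have htri2 : |X0 ((i:ℝ) * T / n) - X r| ≤
      |X0 ((i:ℝ) * T / n) - X ((i:ℝ) * T / n)| + |X ((i:ℝ) * T / n) - X r| :=
    abs_sub_le _ _ _
  have hcomm : |X ((i:ℝ) * T / n) - X r| = |X r - X ((i:ℝ) * T / n)| := abs_sub_comm _ _
  calc |X0 r - X r| ≤ |X0 r - X0 ((i:ℝ) * T / n)| + |X0 ((i:ℝ) * T / n) - X r| := htri1
    _ ≤ L * Real.sqrt δ + (δ + L * Real.sqrt δ) := by
        rw [hcomm] at htri2
        linarith
    _ ≤ L * Real.sqrt δ + (Real.sqrt δ + L * Real.sqrt δ) := by linarith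
    _ = (2 * L + 1) * Real.sqrt δ := by ring
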